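/- Let R be a finite commutative chain ring with maximal ideal ⟨γ⟩, nilpotency index t, and residue field of cardinality q, and let n be a positive integer with gcd(n, q) = 1. If there exists a non-trivial self-dual cyclic code of length n over R (i.e., a cyclic code C with C = C⊥ and C not of the form γ^s·R^n for any integer s), then t is even. -/

import Mathlib

open Polynomial

section Defs

variable {R : Type*}

/-- An idempotent `e` of a commutative ring is *primitive* if it is nonzero and cannot be
written as a sum of two nonzero orthogonal idempotents. -/
def IsPrimitiveIdem [CommRing R] (e : R) : Prop :=
  IsIdempotentElem e ∧ e ≠ 0 ∧
    ∀ u v : R, IsIdempotentElem u → IsIdempotentElem v → u * v = 0 → e = u + v →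
      u = 0 ∨ v = 0

/-- A family of idempotents forming a complete set of pairwise orthogonal idempotents. -/
def IsCompleteOrthoIdem [CommRing R] {r : ℕ} (e : Fin r → R) : Prop :=
  (∀ i, IsIdempotentElem (e i)) ∧ (∑ i, e i) = 1 ∧
    ∀ i j, i ≠ j → e i * e j = 0

/-- A complete set of pairwise orthogonal primitive idempotents. -/
def IsCompletePrimIdem [CommRing R] {r : ℕ} (e : Fin r → R) : Prop :=
  IsCompleteOrthoIdem e ∧ ∀ i, IsPrimitiveIdem (e i)

/-- The `lam`-constacyclic shift `(a_0, …, a_(n-1)) ↦ (lam·a_(n-1), a_0, …, a_(n-2))`. -/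
def ctShift [CommRing R] {n : ℕ} [NeZero n] (lam : R) (a : Fin n → R) : Fin n → R :=
  fun i => if i = 0 then lam * a (i - 1) else a (i - 1)

/-- The dual code of a linear code of length `n` over `R`. -/
def dualCode [CommRing R] {n : ℕ} (Ccode : Submodule R (Fin n → R)) :
    Submodule R (Fin n → R) where
  carrier := {a | ∀ b ∈ Ccode, ∑ i, a i * b i = 0}
  add_mem' := by
    intro a a' ha ha' b hb
    simpa [add_mul, Finset.sum_add_distrib] using by rw [ha b hb, ha' b hb, add_zero]
  zero_mem' := by intro b hb; simp
  smul_mem' := by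
    intro c a ha b hb
    simpa [Finset.mul_sum, mul_assoc] using by rw [← Finset.mul_sum, ha b hb, mul_zero]

/-- The linear map `(a_0, …, a_(n-1)) ↦ a_0 + a_1 x + ⋯ + a_(n-1) x^(n-1)` from `R^n` to
`R[X]/⟨g⟩`. -/
noncomputable def polyLin [CommRing R] (n : ℕ) (g : R[X]) :
    (Fin n → R) →ₗ[R] (R[X] ⧸ Ideal.span {g}) where
  toFun a := Ideal.Quotient.mk _ (∑ i, C (a i) * X ^ (i : ℕ))
  map_add' a b := by
    simp only [Pi.add_apply, map_add, add_mul, Finset.sum_add_distrib]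
  map_smul' c a := by
    simp only [Pi.smul_apply, smul_eq_mul, RingHom.id_apply]
    have h : (∑ i : Fin n, C (c * a i) * X ^ (i : ℕ))
        = c • ∑ i : Fin n, C (a i) * X ^ (i : ℕ) := by
      rw [Finset.smul_sum]
      exact Finset.sum_congr rfl fun i _ => by
        rw [Polynomial.smul_eq_C_mul, ← mul_assoc, ← C_mul]
    rw [h]
    exact (Submodule.Quotient.mk_smul (Ideal.span {g}) c
      (∑ i : Fin n, C (a i) * X ^ (i : ℕ))).symm

/-- The linear code of length `n` corresponding to an ideal of `R[X]/⟨g⟩` under the usual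
identification. -/
noncomputable def idealCode [CommRing R] (n : ℕ) (g : R[X])
    (I : Ideal (R[X] ⧸ Ideal.span {g})) : Submodule R (Fin n → R) :=
  (Submodule.restrictScalars R (I : Submodule (R[X] ⧸ Ideal.span {g}) (R[X] ⧸ Ideal.span {g}))).comap
    (polyLin n g)

/-- The reciprocal `f* = a_0 x^(n-1) + a_1 x^(n-2) + ⋯ + a_(n-1)` of an element
`f = a_0 + a_1 x + ⋯ + a_(n-1) x^(n-1)` of `R[X]/⟨g⟩`, viewed in `R[X]/⟨h⟩`; the canonical
representative of degree `< n` is obtained by reduction `%ₘ g` of any representative. -/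
noncomputable def recip [CommRing R] (n : ℕ) (g h : R[X]) (f : R[X] ⧸ Ideal.span {g}) :
    R[X] ⧸ Ideal.span {h} :=
  Ideal.Quotient.mk _ (((Ideal.Quotient.mk_surjective f).choose %ₘ g).reflect (n - 1))

/-- The code `c·R^n = {(c·b_0, …, c·b_(n-1)) : b ∈ R^n}`. -/
def scalarCode [CommRing R] (n : ℕ) (c : R) : Submodule R (Fin n → R) where
  carrier := {a | ∀ i, ∃ b, a i = c * b}
  add_mem' := by
    intro a a' ha ha' i
    obtain ⟨b, hb⟩ := ha i; obtain ⟨b', hb'⟩ := ha' i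
    exact ⟨b + b', by simp [hb, hb', mul_add]⟩
  zero_mem' := fun i => ⟨0, by simp⟩
  smul_mem' := by
    intro r a ha i
    obtain ⟨b, hb⟩ := ha i
    exact ⟨r * b, by simp [hb]; ring⟩

end Defs


section Aux
variable {R : Type*} [CommRing R]

lemma aux_gammak_mul [IsLocalRing R] (γ : R) (t k : ℕ)
    (hmax : IsLocalRing.maximalIdeal R = Ideal.span {γ})
    (hnil : γ ^ t = 0) (hnil' : γ ^ (t - 1) ≠ 0)
    (ht : t = 2 * k + 1) (j : R) (hj : j * j = 0) : γ ^ k * j = 0 := by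
  classical
  rcases eq_or_ne j 0 with rfl | hj0
  · simp
  have hex : ∃ i, ¬ γ ^ i ∣ j := ⟨t, by rw [hnil]; simpa using hj0⟩
  set m := Nat.find hex with hm
  have hspec : ¬ γ ^ m ∣ j := Nat.find_spec hex
  have hm0 : m ≠ 0 := by
    intro h; rw [h] at hspec; simp at hspec
  obtain ⟨i, hmi⟩ : ∃ i, m = i + 1 := ⟨m - 1, by omega⟩
  rw [hmi] at hspec
  have hdvd : γ ^ i ∣ j := by
    by_contra h
    exact Nat.find_min hex (show i < m by omega) h
  obtain ⟨c, hc⟩ := hdvd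
  have hcu : IsUnit c := by
    by_contra hcu
    have : c ∈ IsLocalRing.maximalIdeal R := hcu
    rw [hmax, Ideal.mem_span_singleton] at this
    obtain ⟨d, hd⟩ := this
    exact hspec ⟨d, by rw [hc, hd, pow_succ]; ring⟩
  have h2i : γ ^ (2 * i) = 0 := by
    have h1 : γ ^ (2 * i) * (c * c) = 0 := by
      rw [← hj, hc, two_mul, pow_add]; ring
    exact ((hcu.mul hcu).mul_left_eq_zero).mp h1
  have hti : t ≤ 2 * i := by
    by_contra h
    apply hnil'
    have : γ ^ (t - 1) = γ ^ (2 * i) * γ ^ (t - 1 - 2 * i) := by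
      rw [← pow_add]; congr 1; omega
    rw [this, h2i, zero_mul]
  have hki : t ≤ k + i := by omega
  have : γ ^ (k + i) = 0 := by
    have : γ ^ (k + i) = γ ^ t * γ ^ (k + i - t) := by
      rw [← pow_add]; congr 1; omega
    rw [this, hnil, zero_mul]
  rw [hc, ← mul_assoc, ← pow_add, this, zero_mul]

lemma aux_nat_unit [Finite R] [IsLocalRing R] (q n : ℕ)
    (hq : q = Nat.card (IsLocalRing.ResidueField R)) (hgcd : Nat.gcd n q = 1) :
    IsUnit (n : R) := by
  by_contra h
  set K := IsLocalRing.ResidueField R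
  haveI : Finite K := Finite.of_surjective (IsLocalRing.residue R) Ideal.Quotient.mk_surjective
  haveI : Fintype K := Fintype.ofFinite K
  have hmem : (n : R) ∈ IsLocalRing.maximalIdeal R := h
  have hres : ((n : ℕ) : K) = 0 := by
    have : IsLocalRing.residue R ((n : ℕ) : R) = 0 := Ideal.Quotient.eq_zero_iff_mem.mpr hmem
    simpa using this
  set p := ringChar K with hp
  haveI : CharP K p := ringChar.charP K
  have hprime : p.Prime := CharP.char_is_prime K p
  have hpn : p ∣ n := (CharP.cast_eq_zero_iff K p n).mp hres
  obtain ⟨a, hpa, hcard⟩ := FiniteField.card K p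
  have hpq : p ∣ q := by
    rw [hq, Nat.card_eq_fintype_card, hcard]
    exact dvd_pow_self p a.ne_zero
  have : p ∣ 1 := hgcd ▸ Nat.dvd_gcd hpn hpq
  exact hprime.ne_one (Nat.dvd_one.mp this)

end Aux

open Fin.NatCast


/-- If a non-trivial self-dual cyclic code of length `n` exists over a finite chain ring,
then the nilpotency index `t` is even. -/
theorem even_nilpotency_of_nontrivial_selfdual_cyclic
    {R : Type*} [CommRing R] [Finite R] [IsLocalRing R]
    (γ : R) (t : ℕ)
    (hmax : IsLocalRing.maximalIdeal R = Ideal.span {γ})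
    (hnil : γ ^ t = 0) (hnil' : γ ^ (t - 1) ≠ 0)
    (q : ℕ) (hq : q = Nat.card (IsLocalRing.ResidueField R))
    (n : ℕ) [NeZero n] (hgcd : Nat.gcd n q = 1)
    (hex : ∃ Ccode : Submodule R (Fin n → R),
      (∀ a ∈ Ccode, ctShift (1 : R) a ∈ Ccode) ∧ Ccode = dualCode Ccode ∧
      ∀ s : ℕ, Ccode ≠ scalarCode n (γ ^ s)) :
    Even t := by
  obtain ⟨C, hshift, hdual, -⟩ := hex
  by_contra hodd
  obtain ⟨k, hk⟩ : ∃ k, t = 2 * k + 1 := by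
    rcases Nat.odd_iff.mp (Nat.not_even_iff_odd.mp hodd) with h
    exact ⟨t / 2, by omega⟩
  -- all cyclic shifts stay in C
  have hsh : ∀ b ∈ C, ∀ m : ℕ, (fun i : Fin n => b (i - (m : Fin n))) ∈ C := by
    intro b hb m
    induction m with
    | zero => simpa using hb
    | succ m ih =>
      have h2 := hshift _ ih
      have heq : ctShift (1 : R) (fun i : Fin n => b (i - (m : Fin n)))
          = fun i : Fin n => b (i - (((m + 1 : ℕ)) : Fin n)) := by
        funext i
        simp only [ctShift, one_mul]
        have hsub : i - 1 - (m : Fin n) = i - (((m + 1 : ℕ)) : Fin n) := by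
          push_cast
          rw [sub_sub, add_comm]
        split <;> rw [hsub]
      rwa [heq] at h2
  have hσσ : ∀ a ∈ C, ∀ b ∈ C, (∑ i, a i) * (∑ i, b i) = 0 := by
    intro a ha b hb
    have ha' : a ∈ dualCode C := hdual ▸ ha
    have key : ∀ c : Fin n, ∑ i, a i * b (i - c) = 0 := by
      intro c
      have hc := hsh b hb (c : ℕ)
      rw [Fin.cast_val_eq_self] at hc
      exact ha' _ hc
    calc (∑ i, a i) * (∑ j, b j)
        = ∑ i : Fin n, ∑ j : Fin n, a i * b j := Finset.sum_mul_sum _ _ _ _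
      _ = ∑ i : Fin n, ∑ c : Fin n, a i * b (i - c) := by
          refine Finset.sum_congr rfl fun i _ => ?_
          exact (Equiv.sum_comp (Equiv.subLeft i) (fun j => a i * b j)).symm
      _ = ∑ c : Fin n, ∑ i : Fin n, a i * b (i - c) := Finset.sum_comm
      _ = 0 := by simp [key]
  have hγk : ∀ b ∈ C, γ ^ k * (∑ i, b i) = 0 := fun b hb =>
    aux_gammak_mul γ t k hmax hnil hnil' hk _ (hσσ b hb b hb)
  have hv : (fun _ : Fin n => γ ^ k) ∈ dualCode C := by
    intro b hb
    rw [← Finset.mul_sum]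
    exact hγk b hb
  have hvC : (fun _ : Fin n => γ ^ k) ∈ C := hdual ▸ hv
  have hs : (∑ _i : Fin n, γ ^ k) = (n : R) * γ ^ k := by
    simp [Finset.sum_const, nsmul_eq_mul]
  have h0 : ((n : R) * γ ^ k) * ((n : R) * γ ^ k) = 0 := by
    rw [← hs]; exact hσσ _ hvC _ hvC
  have hnunit : IsUnit ((n : R)) := aux_nat_unit q n hq hgcd
  have h2k : γ ^ (2 * k) = 0 := by
    have h1 : ((n : R) * (n : R)) * γ ^ (2 * k) = 0 := by
      rw [← h0, two_mul, pow_add]; ring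
    exact ((hnunit.mul hnunit).mul_right_eq_zero).mp h1
  apply hnil'
  have : t - 1 = 2 * k := by omega
  rw [this, h2k]
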